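/- If H is an integer multiple of 2^(p+1) and L is an integer with |L| < 2^(p-1), and A = H + L is nonnegative, then bit p and bit p-1 of A are equal. -/

import Mathlib

lemma aux_bits (b n : ℕ) (hb : 0 < b)
    (h : n % (4 * b) < b ∨ 3 * b < n % (4 * b)) :
    n / (2 * b) % 2 = n / b % 2 := by
  have h1 : n / (2 * b) = n / b / 2 := by
    rw [Nat.div_div_eq_div_mul, mul_comm]
  have h2 : n % (b * 4) / b = n / b % 4 := Nat.mod_mul_right_div_self n b 4
  rw [mul_comm 4 b] at h
  have hlt : n % (b * 4) < b * 4 := Nat.mod_lt _ (by omega)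
  have ht : n % (b * 4) / b = 0 ∨ n % (b * 4) / b = 3 := by
    rcases h with h | h
    · left; exact Nat.div_eq_of_lt h
    · right
      refine Nat.div_eq_of_lt_le (by omega) (by omega)
  rw [h1]
  omega

theorem bits_agree_of_small_perturbation (p : ℕ) (hp : 1 ≤ p) (H L A : ℤ)
    (hH : (2 ^ (p + 1) : ℤ) ∣ H) (hL : |L| < 2 ^ (p - 1))
    (hA : A = H + L) (h0 : 0 ≤ A) :
    A.toNat / 2 ^ p % 2 = A.toNat / 2 ^ (p - 1) % 2 := by
  obtain ⟨q, hq⟩ := hH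
  set b : ℕ := 2 ^ (p - 1) with hb
  have hb0 : 0 < b := Nat.pow_pos (by norm_num)
  have hp1 : 2 ^ p = 2 * b := by rw [hb, ← pow_succ']; congr 1; omega
  have hp2 : 2 ^ (p + 1) = 4 * b := by
    rw [hb]; rw [show (4 : ℕ) = 2 ^ 2 by norm_num, ← pow_add]; congr 1; omega
  have ha : (2 : ℤ) ^ (p - 1) = (b : ℤ) := by push_cast [hb]; ring
  have h4b : (2 : ℤ) ^ (p + 1) = 4 * (b : ℤ) := by exact_mod_cast congrArg (Nat.cast (R := ℤ)) hp2
  have hA4 : A % (4 * (b : ℤ)) = L % (4 * (b : ℤ)) := by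
    rw [hA, hq, h4b, add_comm, Int.add_mul_emod_self_left]
  have hLb : |L| < (b : ℤ) := by rwa [ha] at hL
  have key : A % (4 * (b : ℤ)) < b ∨ 3 * (b : ℤ) < A % (4 * (b : ℤ)) := by
    rw [hA4]
    have hb0' : (0 : ℤ) < b := by exact_mod_cast hb0
    rcases abs_lt.mp hLb with ⟨hl, hr⟩
    rcases le_or_gt 0 L with hL0 | hL0
    · left
      rw [Int.emod_eq_of_lt hL0 (by linarith)]
      exact hr
    · right
      have h1 : L % (4 * (b : ℤ)) = (L + 4 * b * 1) % (4 * b) := by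
        rw [Int.add_mul_emod_self_left]
      rw [h1, mul_one, Int.emod_eq_of_lt (by linarith) (by linarith)]
      linarith
  -- transfer to ℕ
  have hnat : A.toNat % (4 * b) < b ∨ 3 * b < A.toNat % (4 * b) := by
    have hc : ((A.toNat % (4 * b) : ℕ) : ℤ) = A % (4 * (b : ℤ)) := by
      push_cast
      rw [Int.toNat_of_nonneg h0]
    rcases key with h | h
    · left; exact_mod_cast hc ▸ h
    · right; exact_mod_cast hc ▸ h
  rw [hp1]
  exact aux_bits b A.toNat hb0 hnat
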